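/- arXiv:2205.06507 — 2 statements merged into one kernel-verified Lean document; each statement's English description precedes it below -/
import Mathlib

section
/- Let P₀, …, Pₙ be probability measures and μ₀,…,μₙ their kernel embeddings in a Hilbert space H. Suppose w : ℝ → ℝ is integrable with ∫ w = 0 and antiderivative W compactly supported in an interval of length smaller than min gaps of t₁ < … < tₙ. Then for the abrupt drift process p_t with these concepts and change points, ‖∫ p_s w(t−s) ds‖_H = Σⱼ₌₁ⁿ ‖μⱼ − μⱼ₋₁‖_H · |W(t − tⱼ)| for all t. -/
open MeasureTheory

/-- Index of the active concept at time `s` of a drift process with abrupt drift only,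
with change points `t 0 < … < t (n-1)`: the number of change points `≤ s`. -/
noncomputable def conceptIndex (n : ℕ) (t : Fin n → ℝ) (s : ℝ) : Fin (n + 1) :=
  ⟨(Finset.univ.filter (fun i => t i ≤ s)).card,
    Nat.lt_succ_of_le (le_trans (Finset.card_filter_le _ _) (by simp))⟩

/-- The set of change points `≤ s` is the initial segment of length `conceptIndex`. -/
lemma conceptIndex_filter_eq (n : ℕ) (t : Fin n → ℝ) (ht : StrictMono t) (s : ℝ) :
    Finset.univ.filter (fun j : Fin n => t j ≤ s)
      = Finset.univ.filter (fun j : Fin n => (j : ℕ) < (conceptIndex n t s : ℕ)) := by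
  ext j
  simp only [Finset.mem_filter, Finset.mem_univ, true_and, conceptIndex]
  constructor
  · intro hj
    have hsub : Finset.Iic j ⊆ Finset.univ.filter (fun i : Fin n => t i ≤ s) := by
      intro i hi
      simp only [Finset.mem_Iic] at hi
      simp only [Finset.mem_filter, Finset.mem_univ, true_and]
      exact le_trans (ht.monotone hi) hj
    have := Finset.card_le_card hsub
    rw [Fin.card_Iic] at this
    exact Finset.mem_filter.mpr ⟨Finset.mem_univ _, this⟩
  · intro hj
    by_contra hnot
    have hsub : Finset.univ.filter (fun i : Fin n => t i ≤ s) ⊆ Finset.Iio j := by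
      intro i hi
      simp only [Finset.mem_filter, Finset.mem_univ, true_and] at hi
      simp only [Finset.mem_Iio]
      by_contra hij
      exact hnot (le_trans (ht.monotone (not_lt.mp hij)) hi)
    have := Finset.card_le_card hsub
    rw [Fin.card_Iio] at this
    have hj' : (j : ℕ) < (Finset.univ.filter (fun i : Fin n => t i ≤ s)).card :=
      (Finset.mem_filter.mp hj).2
    omega

/-- Telescoping sum over an initial segment of `Fin n`. -/
lemma telescope_initial {H : Type*} [AddCommGroup H] (n : ℕ) (μ : Fin (n + 1) → H)
    (k : ℕ) (hk : k ≤ n) :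
    ∑ j ∈ Finset.univ.filter (fun j : Fin n => (j : ℕ) < k),
        (μ j.succ - μ j.castSucc) = μ ⟨k, Nat.lt_succ_of_le hk⟩ - μ 0 := by
  induction k with
  | zero =>
    have : Finset.univ.filter (fun j : Fin n => (j : ℕ) < 0) = ∅ := by
      ext j; simp
    rw [this, Finset.sum_empty]
    have : (⟨0, Nat.lt_succ_of_le (Nat.zero_le n)⟩ : Fin (n + 1)) = 0 := rfl
    rw [this, sub_self]
  | succ k ih =>
    have hkn : k < n := hk
    have hins : Finset.univ.filter (fun j : Fin n => (j : ℕ) < k + 1)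
        = insert (⟨k, hkn⟩ : Fin n) (Finset.univ.filter (fun j : Fin n => (j : ℕ) < k)) := by
      ext j
      simp only [Finset.mem_filter, Finset.mem_univ, true_and, Finset.mem_insert, Fin.ext_iff]
      omega
    rw [hins, Finset.sum_insert (by simp), ih (le_of_lt hkn)]
    have h1 : (⟨k, hkn⟩ : Fin n).succ = ⟨k + 1, Nat.lt_succ_of_le hk⟩ := rfl
    have h2 : (⟨k, hkn⟩ : Fin n).castSucc = ⟨k, Nat.lt_succ_of_le (le_of_lt hkn)⟩ := rfl
    rw [h1, h2]
    abel

/-- for an abrupt-drift process with concepts embedded as `μ₀,…,μₙ ∈ H`,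
and a zero-mean integrable weighting `w` whose antiderivative `W` is supported in an
interval of length smaller than the minimal gap between the change points,
`‖∫ μ_{p_s} w(t-s) ds‖ = Σⱼ ‖μⱼ - μⱼ₋₁‖ |W(t - tⱼ)|` for all `t`. -/
theorem abrupt_drift_magnitude_norm
    {H : Type*} [NormedAddCommGroup H] [InnerProductSpace ℝ H] [CompleteSpace H]
    (n : ℕ) (t : Fin n → ℝ) (ht : StrictMono t)
    (μ : Fin (n + 1) → H)
    (m : ℝ → H) (hm : ∀ s, m s = μ (conceptIndex n t s))
    (w : ℝ → ℝ) (hw : Integrable w) (hw0 : ∫ x, w x = 0)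
    (W : ℝ → ℝ) (hW : ∀ x, W x = ∫ s in Set.Iic x, w s)
    (a l : ℝ) (hWsupp : Function.support W ⊆ Set.Icc a (a + l))
    (hgap : ∀ i j : Fin n, i < j → l < t j - t i) :
    ∀ τ : ℝ,
      ‖∫ s : ℝ, w (τ - s) • m s‖
        = ∑ j : Fin n, ‖μ j.succ - μ j.castSucc‖ * |W (τ - t j)| := by
  intro τ
  set Δ : Fin n → H := fun j => μ j.succ - μ j.castSucc with hΔ
  set c : Fin n → ℝ := fun j => W (τ - t j) with hc
  -- integrability of s ↦ w (τ - s)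
  have hwτ : Integrable (fun s => w (τ - s)) := (integrable_comp_sub_left w τ).mpr hw
  -- pointwise decomposition of the integrand
  have key : ∀ s : ℝ, w (τ - s) • m s
      = w (τ - s) • μ 0
        + ∑ j : Fin n, (Set.indicator (Set.Ici (t j)) (fun u => w (τ - u)) s) • Δ j := by
    intro s
    have hmem : ((conceptIndex n t s : Fin (n+1)) : ℕ) ≤ n :=
      Nat.lt_succ_iff.mp (conceptIndex n t s).isLt
    have htel := telescope_initial n μ ((conceptIndex n t s : Fin (n+1)) : ℕ) hmem
    have hidx : (⟨((conceptIndex n t s : Fin (n+1)) : ℕ), Nat.lt_succ_of_le hmem⟩ : Fin (n+1))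
        = conceptIndex n t s := by
      apply Fin.ext; rfl
    rw [hidx] at htel
    rw [← conceptIndex_filter_eq n t ht s] at htel
    have hμ : μ (conceptIndex n t s)
        = μ 0 + ∑ j ∈ Finset.univ.filter (fun j : Fin n => t j ≤ s), Δ j := by
      rw [htel]; abel
    rw [hm, hμ, smul_add, Finset.smul_sum]
    congr 1
    rw [Finset.sum_filter]
    apply Finset.sum_congr rfl
    intro j _
    by_cases hj : t j ≤ s
    · rw [if_pos hj, Set.indicator_of_mem (Set.mem_Ici.mpr hj)]
    · rw [if_neg hj, Set.indicator_of_notMem (by simpa using hj), zero_smul]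
  -- integrability of each summand
  have hind : ∀ j : Fin n,
      Integrable (fun s => (Set.indicator (Set.Ici (t j)) (fun u => w (τ - u)) s) • Δ j) :=
    fun j => (hwτ.indicator measurableSet_Ici).smul_const _
  have hμ0int : Integrable (fun s => w (τ - s) • μ 0) := hwτ.smul_const _
  -- the value of each summand's integral
  have hindval : ∀ j : Fin n,
      (∫ s, (Set.indicator (Set.Ici (t j)) (fun u => w (τ - u)) s) • Δ j) = c j • Δ j := by
    intro j
    rw [integral_smul_const, integral_indicator measurableSet_Ici]
    have hemb : MeasurableEmbedding (fun x : ℝ => τ - x) :=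
      (Homeomorph.subLeft τ).measurableEmbedding
    have hpres : MeasurePreserving (fun x : ℝ => τ - x) volume volume :=
      Measure.measurePreserving_sub_left volume τ
    have himg := hpres.setIntegral_image_emb hemb w (Set.Ici (t j))
    rw [Set.image_const_sub_Ici] at himg
    rw [← himg, ← hW (τ - t j)]
  have hI : (∫ s : ℝ, w (τ - s) • m s) = ∑ j : Fin n, c j • Δ j := by
    rw [integral_congr_ae (Filter.Eventually.of_forall key)]
    rw [integral_add hμ0int (integrable_finset_sum _ fun j _ => hind j)]
    rw [integral_smul_const, integral_sub_left_eq_self w volume τ, hw0, zero_smul, zero_add]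
    rw [integral_finset_sum _ fun j _ => hind j]
    exact Finset.sum_congr rfl fun j _ => hindval j
  rw [hI]
  -- at most one coefficient is nonzero
  have hone : ∀ i j : Fin n, c i ≠ 0 → c j ≠ 0 → i = j := by
    intro i j hi hj
    have hmi : τ - t i ∈ Set.Icc a (a + l) := hWsupp hi
    have hmj : τ - t j ∈ Set.Icc a (a + l) := hWsupp hj
    by_contra hne
    rcases lt_or_gt_of_ne hne with h | h
    · have := hgap i j h
      have h1 := hmi.2
      have h2 := hmj.1
      linarith
    · have := hgap j i h
      have h1 := hmj.2
      have h2 := hmi.1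
      linarith
  by_cases hex : ∃ j, c j ≠ 0
  · obtain ⟨j₀, hj₀⟩ := hex
    rw [Finset.sum_eq_single j₀
        (fun b _ hb => by
          have hb0 : c b = 0 := by
            by_contra h; exact hb (hone b j₀ h hj₀)
          rw [hb0, zero_smul])
        (by simp)]
    rw [Finset.sum_eq_single j₀
        (fun b _ hb => by
          have hb0 : c b = 0 := by
            by_contra h; exact hb (hone b j₀ h hj₀)
          show ‖Δ b‖ * |c b| = 0
          rw [hb0, abs_zero, mul_zero])
        (by simp)]
    show ‖c j₀ • Δ j₀‖ = ‖Δ j₀‖ * |c j₀|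
    rw [norm_smul, Real.norm_eq_abs, mul_comm]
  · push_neg at hex
    have hz : ∀ j : Fin n, c j • Δ j = 0 := fun j => by rw [hex j, zero_smul]
    simp only [hz, Finset.sum_const_zero, norm_zero]
    symm
    apply Finset.sum_eq_zero
    intro j _
    show ‖Δ j‖ * |c j| = 0
    rw [hex j, abs_zero, mul_zero]
end

section
/- Let p_t be an abrupt-drift process with single change point t₁ and concepts P₀ ≠ P₁, and let w₀ = 1_{[−l,0]} − 1_{[−2l,−l]}. Then, with μᵢ the kernel embeddings, ‖∫ p_s w₀(s − t) ds‖_H = ‖μ₁ − μ₀‖_H · h_l(t − t₁), where h_l(x) = |W(−x)| is the triangular function equal to min(x, 2l − x) for x ∈ [0,2l] and 0 otherwise; in particular the maximum over t equals l · MMD(P₀,P₁) and is attained at t = t₁ + l. -/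
open MeasureTheory

/-- for a single abrupt change point `t₁` with embedded concepts
`μ₀ ≠ μ₁` and the two-window weighting `w₀ = 1_{[-l,0]} - 1_{[-2l,-l)}`,
`‖∫ p_s w₀(s - t) ds‖ = ‖μ₁ - μ₀‖ h_l(t - t₁)` with the triangular shape
`h_l(x) = min(x, 2l - x)` on `[0,2l]` and `0` elsewhere; the maximum over `t` is
`l · MMD(P₀,P₁) = l ‖μ₁ - μ₀‖`, attained at `t = t₁ + l`. -/
theorem single_change_point_shape_function
    {H : Type*} [NormedAddCommGroup H] [InnerProductSpace ℝ H] [CompleteSpace H]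
    (μ₀ μ₁ : H) (hne : μ₀ ≠ μ₁)
    (t₁ : ℝ)
    (m : ℝ → H) (hm : ∀ s, m s = if s < t₁ then μ₀ else μ₁)
    (l : ℝ) (hl : 0 < l)
    (w₀ : ℝ → ℝ)
    (hw : ∀ x, w₀ x = if x ∈ Set.Icc (-l) 0 then (1 : ℝ)
        else if x ∈ Set.Ico (-(2 * l)) (-l) then -1 else 0)
    (hfun : ℝ → ℝ)
    (hhl : ∀ x, hfun x = if x ∈ Set.Icc (0 : ℝ) (2 * l) then min x (2 * l - x) else 0) :
    (∀ τ : ℝ, ‖∫ s : ℝ, w₀ (s - τ) • m s‖ = ‖μ₁ - μ₀‖ * hfun (τ - t₁))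
      ∧ ‖∫ s : ℝ, w₀ (s - (t₁ + l)) • m s‖ = l * ‖μ₁ - μ₀‖
      ∧ ∀ τ : ℝ, ‖∫ s : ℝ, w₀ (s - τ) • m s‖ ≤ l * ‖μ₁ - μ₀‖ := by
  -- the triangular shape as a pure arithmetic identity
  have tri : ∀ x : ℝ, max (min x l) 0 - max (min (x - l) l) 0 =
      if x ∈ Set.Icc (0:ℝ) (2*l) then min x (2*l - x) else 0 := by
    intro x
    simp only [Set.mem_Icc]
    by_cases hmem : (0:ℝ) ≤ x ∧ x ≤ 2*l
    · rw [if_pos hmem]; obtain ⟨h0, h2⟩ := hmem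
      rcases le_total x l with h1 | h1 <;> simp [min_def, max_def] <;> split_ifs <;> linarith
    · rw [if_neg hmem]; push_neg at hmem
      rcases le_total x 0 with h0 | h0
      · simp [min_def, max_def] <;> split_ifs <;> linarith
      · have h2 := hmem h0
        simp [min_def, max_def] <;> split_ifs <;> linarith
  -- the key integral formula
  have key : ∀ τ : ℝ, (∫ s : ℝ, w₀ (s - τ) • m s)
      = (max (min (τ - t₁) l) 0 - max (min (τ - t₁ - l) l) 0) • (μ₁ - μ₀) := by
    intro τ
    set A : Set ℝ := {s | s - τ ∈ Set.Icc (-l) 0} with hAdef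
    set B : Set ℝ := {s | s - τ ∈ Set.Ico (-(2*l)) (-l)} with hBdef
    set C : Set ℝ := {s | ¬ s < t₁} with hCdef
    have hA : A = Set.Icc (τ - l) τ := by
      ext s
      simp only [hAdef, Set.mem_setOf_eq, Set.mem_Icc]
      constructor <;> rintro ⟨u, v⟩ <;> constructor <;> linarith
    have hB : B = Set.Ico (τ - 2*l) (τ - l) := by
      ext s
      simp only [hBdef, Set.mem_setOf_eq, Set.mem_Ico]
      constructor <;> rintro ⟨u, v⟩ <;> constructor <;> linarith
    have hC : C = Set.Ici t₁ := by
      ext s; simp [hCdef, not_lt]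
    have hAC : A ∩ C = Set.Icc (max (τ - l) t₁) τ := by
      rw [hA, hC]
      ext s
      simp only [Set.mem_inter_iff, Set.mem_Icc, Set.mem_Ici, max_le_iff]
      tauto
    have hBC : B ∩ C = Set.Ico (max (τ - 2*l) t₁) (τ - l) := by
      rw [hB, hC]
      ext s
      simp only [Set.mem_inter_iff, Set.mem_Ico, Set.mem_Ici, max_le_iff]
      tauto
    have mA : MeasurableSet A := by rw [hA]; exact measurableSet_Icc
    have mB : MeasurableSet B := by rw [hB]; exact measurableSet_Ico
    have mAC : MeasurableSet (A ∩ C) := by rw [hAC]; exact measurableSet_Icc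
    have mBC : MeasurableSet (B ∩ C) := by rw [hBC]; exact measurableSet_Ico
    have fA : volume A < ⊤ := by rw [hA, Real.volume_Icc]; exact ENNReal.ofReal_lt_top
    have fB : volume B < ⊤ := by rw [hB, Real.volume_Ico]; exact ENNReal.ofReal_lt_top
    have fAC : volume (A ∩ C) < ⊤ := by rw [hAC, Real.volume_Icc]; exact ENNReal.ofReal_lt_top
    have fBC : volume (B ∩ C) < ⊤ := by rw [hBC, Real.volume_Ico]; exact ENNReal.ofReal_lt_top
    have int1 : Integrable (A.indicator (fun _ => μ₀)) volume := by
      rw [integrable_indicator_iff mA]; exact integrableOn_const fA.ne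
    have int2 : Integrable (B.indicator (fun _ => μ₀)) volume := by
      rw [integrable_indicator_iff mB]; exact integrableOn_const fB.ne
    have int3 : Integrable ((A ∩ C).indicator (fun _ => μ₁ - μ₀)) volume := by
      rw [integrable_indicator_iff mAC]; exact integrableOn_const fAC.ne
    have int4 : Integrable ((B ∩ C).indicator (fun _ => μ₁ - μ₀)) volume := by
      rw [integrable_indicator_iff mBC]; exact integrableOn_const fBC.ne
    have hdecomp : (fun s : ℝ => w₀ (s - τ) • m s)
        = (A.indicator (fun _ => μ₀) - B.indicator (fun _ => μ₀))
            + ((A ∩ C).indicator (fun _ => μ₁ - μ₀)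
                - (B ∩ C).indicator (fun _ => μ₁ - μ₀)) := by
      funext s
      rw [hw, hm]
      simp only [Pi.add_apply, Pi.sub_apply]
      by_cases h1 : s - τ ∈ Set.Icc (-l) 0 <;>
        by_cases h2 : s - τ ∈ Set.Ico (-(2*l)) (-l) <;>
        by_cases h3 : s < t₁ <;>
        simp only [Set.indicator_apply, Set.mem_inter_iff, hAdef, hBdef, hCdef,
          Set.mem_setOf_eq, h1, h2, h3, if_true, if_false, not_true, not_false_iff,
          true_and, false_and, and_true, and_false] <;>
        first
          | (exfalso; rw [Set.mem_Icc] at h1; rw [Set.mem_Ico] at h2; linarith)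
          | (simp only [one_smul, neg_smul, neg_one_smul, zero_smul, if_true,
              if_false]; abel)
    -- volume computations
    have e1 : τ - max (τ - l) t₁ = min (τ - t₁) l := by
      rcases le_total (τ - l) t₁ with h | h <;>
        simp only [max_eq_right h, max_eq_left h, min_def] <;> split_ifs <;> linarith
    have e2 : (τ - l) - max (τ - 2*l) t₁ = min (τ - t₁ - l) l := by
      rcases le_total (τ - 2*l) t₁ with h | h <;>
        simp [max_eq_right h, max_eq_left h, min_def] <;> split_ifs <;> linarith
    have toRealOfReal : ∀ u : ℝ, (ENNReal.ofReal u).toReal = max u 0 := by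
      intro u
      rcases le_total u 0 with h | h
      · simp [ENNReal.ofReal_eq_zero.mpr h, max_eq_right h]
      · rw [ENNReal.toReal_ofReal h, max_eq_left h]
    have vA : (volume A).toReal = l := by
      rw [hA, Real.volume_Icc, ENNReal.toReal_ofReal (by linarith)]; ring
    have vB : (volume B).toReal = l := by
      rw [hB, Real.volume_Ico, ENNReal.toReal_ofReal (by linarith)]; ring
    have vAC : (volume (A ∩ C)).toReal = max (min (τ - t₁) l) 0 := by
      rw [hAC, Real.volume_Icc, e1, toRealOfReal]
    have vBC : (volume (B ∩ C)).toReal = max (min (τ - t₁ - l) l) 0 := by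
      rw [hBC, Real.volume_Ico, e2, toRealOfReal]
    rw [hdecomp, integral_add' (int1.sub int2) (int3.sub int4),
      integral_sub' int1 int2, integral_sub' int3 int4,
      integral_indicator_const _ mA, integral_indicator_const _ mB,
      integral_indicator_const _ mAC, integral_indicator_const _ mBC,
      measureReal_def, measureReal_def, measureReal_def, measureReal_def,
      vA, vB, vAC, vBC, sub_self, zero_add, ← sub_smul]
  -- the three statements
  have part1 : ∀ τ : ℝ, ‖∫ s : ℝ, w₀ (s - τ) • m s‖ = ‖μ₁ - μ₀‖ * hfun (τ - t₁) := by
    intro τ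
    have hba : max (min (τ - t₁ - l) l) 0 ≤ max (min (τ - t₁) l) 0 :=
      max_le_max (min_le_min (by linarith) le_rfl) le_rfl
    rw [key τ, norm_smul, Real.norm_eq_abs, abs_of_nonneg (sub_nonneg.mpr hba),
      tri (τ - t₁), hhl]
    exact mul_comm _ _
  have hfl : hfun l = l := by
    rw [hhl]
    rw [if_pos (by constructor <;> linarith)]
    have : min l (2*l - l) = l := by
      rw [min_eq_left (by linarith)]
    linarith [this]
  have hbound : ∀ x : ℝ, hfun x ≤ l := by
    intro x
    rw [hhl]
    split_ifs with h
    · obtain ⟨h0, h2⟩ := h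
      rcases le_total x l with h' | h'
      · exact le_trans (min_le_left _ _) h'
      · exact le_trans (min_le_right _ _) (by linarith)
    · linarith
  refine ⟨part1, ?_, ?_⟩
  · rw [part1 (t₁ + l)]
    have : t₁ + l - t₁ = l := by ring
    rw [this, hfl, mul_comm]
  · intro τ
    rw [part1 τ]
    calc ‖μ₁ - μ₀‖ * hfun (τ - t₁) ≤ ‖μ₁ - μ₀‖ * l :=
          mul_le_mul_of_nonneg_left (hbound _) (norm_nonneg _)
      _ = l * ‖μ₁ - μ₀‖ := mul_comm _ _
end
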